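/- Let z : [0,1] → ℝ be four times continuously differentiable with z'(0) = z'(1), and let λ_n = 2πn with n a positive integer. Then ∫_0^1 z(x) cos(λ_n x) dx = (1/λ_n⁴) · [ z'''(0) − z'''(1) + ∫_0^1 z⁗(x) cos(λ_n x) dx ]. -/

import Mathlib

open Real Set intervalIntegral

lemma ibp01 (u u' v v' : ℝ → ℝ)
    (hu : ∀ x ∈ Icc (0:ℝ) 1, HasDerivWithinAt u (u' x) (Icc 0 1) x)
    (hu' : ContinuousOn u' (Icc 0 1))
    (hv : ∀ x, HasDerivAt v (v' x) x)
    (hv' : Continuous v') :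
    ∫ x in (0:ℝ)..1, u x * v' x
      = u 1 * v 1 - u 0 * v 0 - ∫ x in (0:ℝ)..1, u' x * v x := by
  have hucont : ContinuousOn u (Icc 0 1) := fun x hx => (hu x hx).continuousWithinAt
  have hvc : Continuous v := continuous_iff_continuousAt.2 fun x => (hv x).continuousAt
  have hInt1 : IntervalIntegrable (fun x => u' x * v x) MeasureTheory.volume 0 1 := by
    apply ContinuousOn.intervalIntegrable
    rw [uIcc_of_le zero_le_one]
    exact hu'.mul hvc.continuousOn
  have hInt2 : IntervalIntegrable (fun x => u x * v' x) MeasureTheory.volume 0 1 := by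
    apply ContinuousOn.intervalIntegrable
    rw [uIcc_of_le zero_le_one]
    exact hucont.mul hv'.continuousOn
  have key : ∫ x in (0:ℝ)..1, (u' x * v x + u x * v' x)
      = u 1 * v 1 - u 0 * v 0 := by
    refine intervalIntegral.integral_eq_sub_of_hasDeriv_right_of_le
      (f := fun x => u x * v x) (f' := fun x => u' x * v x + u x * v' x)
      zero_le_one (hucont.mul hvc.continuousOn) (fun x hx => ?_) (hInt1.add hInt2)
    have hD : HasDerivAt u (u' x) x :=
      (hu x (Ioo_subset_Icc_self hx)).hasDerivAt (Icc_mem_nhds hx.1 hx.2)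
    exact (hD.mul (hv x)).hasDerivWithinAt
  rw [intervalIntegral.integral_add hInt1 hInt2] at key
  linarith

theorem fourier_cos_coeff_decay (z z1 z2 z3 z4 : ℝ → ℝ)
    (h1 : ∀ x ∈ Icc (0 : ℝ) 1, HasDerivWithinAt z (z1 x) (Icc 0 1) x)
    (h2 : ∀ x ∈ Icc (0 : ℝ) 1, HasDerivWithinAt z1 (z2 x) (Icc 0 1) x)
    (h3 : ∀ x ∈ Icc (0 : ℝ) 1, HasDerivWithinAt z2 (z3 x) (Icc 0 1) x)
    (h4 : ∀ x ∈ Icc (0 : ℝ) 1, HasDerivWithinAt z3 (z4 x) (Icc 0 1) x)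
    (hc : ContinuousOn z4 (Icc 0 1))
    (hbc : z1 0 = z1 1) (n : ℕ) (hn : 0 < n) :
    ∫ x in (0 : ℝ)..1, z x * Real.cos (2 * π * n * x) =
      (1 / (2 * π * n) ^ 4) *
        (z3 0 - z3 1 + ∫ x in (0 : ℝ)..1, z4 x * Real.cos (2 * π * n * x)) := by
  set L : ℝ := 2 * π * n with hLdef
  have hn' : (0:ℝ) < n := by exact_mod_cast hn
  have hL0 : (0:ℝ) < L := by
    rw [hLdef]; positivity
  have hLne : L ≠ 0 := ne_of_gt hL0
  clear_value L
  have hsin1 : Real.sin (L * 1) = 0 := by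
    have : L * 1 = ((2 * n : ℕ) : ℝ) * π := by rw [hLdef]; push_cast; ring
    rw [this, Real.sin_nat_mul_pi]
  have hsin0 : Real.sin (L * 0) = 0 := by simp
  have hcos1 : Real.cos (L * 1) = 1 := by
    have : L * 1 = (n : ℝ) * (2 * π) := by rw [hLdef]; ring
    rw [this, Real.cos_nat_mul_two_pi]
  have hcos0 : Real.cos (L * 0) = 1 := by simp
  have hcoscont : Continuous (fun x => Real.cos (L * x)) :=
    Real.continuous_cos.comp (continuous_const.mul continuous_id)
  have hsincont : Continuous (fun x => Real.sin (L * x)) :=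
    Real.continuous_sin.comp (continuous_const.mul continuous_id)
  have hS : ∀ x : ℝ, HasDerivAt (fun y => Real.sin (L * y) / L) (Real.cos (L * x)) x := by
    intro x
    have h : HasDerivAt (fun y => Real.sin (L * y)) (Real.cos (L * x) * (L * 1)) x :=
      (Real.hasDerivAt_sin (L * x)).comp x ((hasDerivAt_id x).const_mul L)
    have h2 := h.div_const L
    refine h2.congr_deriv ?_
    field_simp
  have hC : ∀ x : ℝ, HasDerivAt (fun y => -Real.cos (L * y) / L) (Real.sin (L * x)) x := by
    intro x
    have h : HasDerivAt (fun y => Real.cos (L * y)) (-Real.sin (L * x) * (L * 1)) x :=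
      (Real.hasDerivAt_cos (L * x)).comp x ((hasDerivAt_id x).const_mul L)
    have h2 := (h.neg).div_const L
    refine h2.congr_deriv ?_
    field_simp
  have cosStep : ∀ (u u' : ℝ → ℝ),
      (∀ x ∈ Icc (0:ℝ) 1, HasDerivWithinAt u (u' x) (Icc 0 1) x) →
      ContinuousOn u' (Icc 0 1) →
      (∫ x in (0:ℝ)..1, u x * Real.cos (L * x))
        = -(∫ x in (0:ℝ)..1, u' x * Real.sin (L * x)) / L := by
    intro u u' hu hu'
    have h := ibp01 u u' (fun y => Real.sin (L * y) / L) (fun y => Real.cos (L * y))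
      hu hu' hS hcoscont
    rw [hsin1, hsin0] at h
    rw [h]
    have : (fun x => u' x * (Real.sin (L * x) / L))
        = fun x => (u' x * Real.sin (L * x)) / L := by funext x; ring
    rw [show (∫ x in (0:ℝ)..1, u' x * (Real.sin (L * x) / L))
        = ∫ x in (0:ℝ)..1, (u' x * Real.sin (L * x)) / L from by rw [this],
      intervalIntegral.integral_div]
    ring
  have sinStep : ∀ (u u' : ℝ → ℝ),
      (∀ x ∈ Icc (0:ℝ) 1, HasDerivWithinAt u (u' x) (Icc 0 1) x) →
      ContinuousOn u' (Icc 0 1) →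
      (∫ x in (0:ℝ)..1, u x * Real.sin (L * x))
        = (u 0 - u 1) / L + (∫ x in (0:ℝ)..1, u' x * Real.cos (L * x)) / L := by
    intro u u' hu hu'
    have h := ibp01 u u' (fun y => -Real.cos (L * y) / L) (fun y => Real.sin (L * y))
      hu hu' hC hsincont
    rw [hcos1, hcos0] at h
    rw [h]
    have : (fun x => u' x * (-Real.cos (L * x) / L))
        = fun x => (-(u' x * Real.cos (L * x))) / L := by funext x; ring
    rw [show (∫ x in (0:ℝ)..1, u' x * (-Real.cos (L * x) / L))
        = ∫ x in (0:ℝ)..1, (-(u' x * Real.cos (L * x))) / L from by rw [this],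
      intervalIntegral.integral_div, intervalIntegral.integral_neg]
    ring
  have hz1c : ContinuousOn z1 (Icc 0 1) := fun x hx => (h2 x hx).continuousWithinAt
  have hz2c : ContinuousOn z2 (Icc 0 1) := fun x hx => (h3 x hx).continuousWithinAt
  have hz3c : ContinuousOn z3 (Icc 0 1) := fun x hx => (h4 x hx).continuousWithinAt
  have e1 := cosStep z z1 h1 hz1c
  have e2 := sinStep z1 z2 h2 hz2c
  have e3 := cosStep z2 z3 h3 hz3c
  have e4 := sinStep z3 z4 h4 hc
  rw [e1, e2, e3, e4, hbc, sub_self]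
  have hL4 : L ^ 4 ≠ 0 := pow_ne_zero 4 hLne
  field_simp
  ring
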